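/- (Theorem 1.1, part B, second case of (1.11), even-moment form (1.12).) Assume V_i ≥ 0 for all i ≥ 1, V_1 = 0, V_2 > 0, V_{2j+1} = 0 for all j ≥ 0, and H(u) < ∞ for all u ∈ [0, u_0) with u_0 > 0. Then for every sequence (x_k)_{k≥1} of positive reals with x_k/k → ∞ as k → ∞, one has ( M_{2k}(x_k) )^{1/k} · e / ( 2k·x_k·V_2 ) → 1 as k → ∞. -/

import Mathlib

open scoped BigOperators ENNReal
open Filter MeasureTheory

noncomputable section

/-- The finset of tuples `(l 0, ..., l (k-1))` (representing `l_1, ..., l_k`) of nonnegative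
integers with `l_1 + 2 l_2 + ⋯ + k l_k = k`. -/
def bellTuples (k : ℕ) : Finset (Fin k → ℕ) :=
  (Fintype.piFinset fun _ => Finset.range (k + 1)).filter
    (fun l => ∑ i, (i.1 + 1) * l i = k)

/-- Weighted Bell polynomial `M_k(x)` for weights `V_1, V_2, …`. -/
def weightedBell (V : ℕ → ℝ) (k : ℕ) (x : ℝ) : ℝ :=
  (Nat.factorial k : ℝ) * ∑ l ∈ bellTuples k, ∏ i : Fin k,
    (x * V (i.1 + 1)) ^ (l i) /
      ((Nat.factorial (i.1 + 1) : ℝ) ^ (l i) * (Nat.factorial (l i) : ℝ))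

/-- Exponential generating function `H(u) = 1 + ∑_{i ≥ 1} V_i u^i / i!` of the weights. -/
def weightEGF (V : ℕ → ℝ) (u : ℝ) : ℝ :=
  1 + ∑' i : ℕ, V (i + 1) * u ^ (i + 1) / (Nat.factorial (i + 1) : ℝ)

/-- Termwise derivative `H'(u) = ∑_{i ≥ 1} V_i u^{i-1}/(i-1)!`. -/
def weightEGFDeriv (V : ℕ → ℝ) (u : ℝ) : ℝ :=
  ∑' i : ℕ, V (i + 1) * u ^ i / (Nat.factorial i : ℝ)

/-- Termwise second derivative `H''(u)`. -/
def weightEGFDeriv2 (V : ℕ → ℝ) (u : ℝ) : ℝ :=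
  ∑' i : ℕ, V (i + 2) * u ^ i / (Nat.factorial i : ℝ)

/-- `H(u) < ∞` for all `u ∈ [0, u_0)`. -/
def HFinite (V : ℕ → ℝ) (u0 : ℝ≥0∞) : Prop :=
  ∀ u : ℝ, 0 ≤ u → ENNReal.ofReal u < u0 →
    Summable (fun i : ℕ => V (i + 1) * u ^ (i + 1) / (Nat.factorial (i + 1) : ℝ))

lemma fact_low (n : ℕ) : (n:ℝ)^n ≤ (n.factorial : ℝ) * Real.exp n := by
  have h := Real.sum_le_exp_of_nonneg (x := (n:ℝ)) (by positivity) (n+1)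
  have h1 : (n:ℝ)^n / n.factorial ≤ Real.exp n := by
    refine le_trans ?_ h
    refine Finset.single_le_sum (f := fun i => (n:ℝ)^i / i.factorial) ?_
      (Finset.self_mem_range_succ n)
    intro i _; positivity
  have hf : (0:ℝ) < n.factorial := by positivity
  calc (n:ℝ)^n = (n:ℝ)^n / n.factorial * n.factorial := by field_simp
    _ ≤ Real.exp n * n.factorial := mul_le_mul_of_nonneg_right h1 hf.le
    _ = _ := by ring

lemma fact_up (n : ℕ) (hn : 1 ≤ n) : (n.factorial : ℝ) * Real.exp n ≤ Real.exp 1 * n * (n:ℝ)^n := by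
  induction n with
  | zero => omega
  | succ m ih =>
    rcases Nat.eq_or_lt_of_le hn with h1 | h1
    · have hm0 : m = 0 := by omega
      subst hm0; norm_num [Nat.factorial]
    · have hm : 1 ≤ m := by omega
      have ihm := ih hm
      have hmR : (1:ℝ) ≤ m := by exact_mod_cast hm
      have key : Real.exp 1 * (m:ℝ)^(m+1) ≤ ((m:ℝ)+1)^(m+1) := by
        have h2 : (1:ℝ) - 1/((m:ℝ)+1) ≤ Real.exp (-(1/((m:ℝ)+1))) := by
          have := Real.add_one_le_exp (-(1/((m:ℝ)+1))); linarith
        have hml : (0:ℝ) < (m:ℝ)+1 := by positivity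
        have h3 : (m:ℝ)/((m:ℝ)+1) ≤ Real.exp (-(1/((m:ℝ)+1))) := by
          have he : (m:ℝ)/((m:ℝ)+1) = 1 - 1/((m:ℝ)+1) := by field_simp; ring
          rw [he]; exact h2
        have h4 : ((m:ℝ)/((m:ℝ)+1))^(m+1) ≤ Real.exp (-(1/((m:ℝ)+1)))^(m+1) :=
          pow_le_pow_left₀ (by positivity) h3 _
        have h5 : Real.exp (-(1/((m:ℝ)+1)))^(m+1) = Real.exp (-1) := by
          rw [← Real.exp_nat_mul]; congr 1; push_cast; field_simp
        have h6 : (m:ℝ)^(m+1) / ((m:ℝ)+1)^(m+1) ≤ Real.exp (-1) := by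
          rw [← div_pow]; rw [h5] at h4; exact h4
        have h7 : (m:ℝ)^(m+1) ≤ Real.exp (-1) * ((m:ℝ)+1)^(m+1) := by
          rw [div_le_iff₀ (by positivity)] at h6; linarith
        calc Real.exp 1 * (m:ℝ)^(m+1) ≤ Real.exp 1 * (Real.exp (-1) * ((m:ℝ)+1)^(m+1)) :=
              mul_le_mul_of_nonneg_left h7 (Real.exp_nonneg 1)
          _ = ((m:ℝ)+1)^(m+1) := by rw [← mul_assoc, ← Real.exp_add]; norm_num
      have e1 : ((m+1).factorial : ℝ) * Real.exp ((m:ℕ)+1 : ℕ) =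
          ((m:ℝ)+1) * ((m.factorial:ℝ) * Real.exp m) * Real.exp 1 := by
        rw [Nat.factorial_succ]
        push_cast [Real.exp_add]
        ring
      calc ((m+1).factorial : ℝ) * Real.exp ((m:ℕ)+1 : ℕ)
          = ((m:ℝ)+1) * ((m.factorial:ℝ) * Real.exp m) * Real.exp 1 := e1
        _ ≤ ((m:ℝ)+1) * (Real.exp 1 * m * (m:ℝ)^m) * Real.exp 1 := by
            apply mul_le_mul_of_nonneg_right _ (Real.exp_nonneg 1)
            exact mul_le_mul_of_nonneg_left ihm (by positivity)
        _ = Real.exp 1 * ((m:ℝ)+1) * (Real.exp 1 * (m:ℝ)^(m+1)) := by ring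
        _ ≤ Real.exp 1 * ((m:ℝ)+1) * ((m:ℝ)+1)^(m+1) := by
            apply mul_le_mul_of_nonneg_left key (by positivity)
        _ = Real.exp 1 * ((m:ℕ)+1 : ℕ) * ((m:ℕ)+1 : ℕ)^(m+1) := by push_cast; ring

/-- Stirling error term. -/
noncomputable def Slog (n : ℕ) : ℝ := Real.log n.factorial - n * Real.log n + n

lemma hSlog_def (n : ℕ) : Slog n = Real.log n.factorial - n * Real.log n + n := rfl

lemma Slog_nonneg (n : ℕ) (hn : 1 ≤ n) : 0 ≤ Slog n := by
  have hnR : (1:ℝ) ≤ n := by exact_mod_cast hn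
  have h := fact_low n
  have h2 := Real.log_le_log (by positivity) h
  rw [Real.log_pow, Real.log_mul (by positivity) (Real.exp_ne_zero _), Real.log_exp] at h2
  unfold Slog; linarith

lemma Slog_le (n : ℕ) (hn : 1 ≤ n) : Slog n ≤ 1 + Real.log n := by
  have hnR : (1:ℝ) ≤ n := by exact_mod_cast hn
  have h := fact_up n hn
  have h2 := Real.log_le_log (by positivity) h
  rw [Real.log_mul (by positivity) (Real.exp_ne_zero _), Real.log_exp,
    Real.log_mul (by positivity) (by positivity), Real.log_mul (Real.exp_ne_zero _) (by positivity),
    Real.log_exp, Real.log_pow] at h2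
  unfold Slog; linarith

lemma tendsto_Slog_div : Tendsto (fun n : ℕ => Slog n / n) atTop (nhds 0) := by
  have hlog : Tendsto (fun n : ℕ => Real.log n / n) atTop (nhds 0) := by
    have := Real.isLittleO_log_id_atTop.tendsto_div_nhds_zero
    exact (this.comp tendsto_natCast_atTop_atTop)
  have hone : Tendsto (fun n : ℕ => 1/(n:ℝ)) atTop (nhds 0) := tendsto_one_div_atTop_nhds_zero_nat
  have hup : Tendsto (fun n : ℕ => 1/(n:ℝ) + Real.log n / n) atTop (nhds 0) := by
    simpa using hone.add hlog
  apply tendsto_of_tendsto_of_tendsto_of_le_of_le' tendsto_const_nhds hup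
  · filter_upwards [eventually_ge_atTop 1] with n hn
    have hnR : (0:ℝ) < n := by exact_mod_cast hn
    exact div_nonneg (Slog_nonneg n hn) hnR.le
  · filter_upwards [eventually_ge_atTop 1] with n hn
    have hnR : (0:ℝ) < n := by exact_mod_cast hn
    rw [← add_div]
    exact (div_le_div_iff_of_pos_right hnR).mpr (by
      have := Slog_le n hn; linarith)


section Bounds
variable (V : ℕ → ℝ) (x : ℝ) (hVpos : ∀ i : ℕ, 1 ≤ i → 0 ≤ V i) (hx : 0 ≤ x)

include hVpos hx in
lemma term_nonneg (k : ℕ) (l : Fin k → ℕ) :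
    0 ≤ ∏ i : Fin k, (x * V (i.1 + 1)) ^ (l i) /
      ((Nat.factorial (i.1 + 1) : ℝ) ^ (l i) * (Nat.factorial (l i) : ℝ)) := by
  apply Finset.prod_nonneg
  intro i _
  have hV := hVpos (i.1+1) (by omega)
  positivity

include hVpos hx in
lemma weightedBell_lower (k : ℕ) (hk : 1 ≤ k) :
    ((2*k).factorial : ℝ) * (x * V 2)^k / (2^k * k.factorial) ≤ weightedBell V (2*k) x := by
  have h1 : 1 < 2*k := by omega
  set i₁ : Fin (2*k) := ⟨1, h1⟩
  set l₀ : Fin (2*k) → ℕ := fun i => if i = i₁ then k else 0 with hl₀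
  have hmem : l₀ ∈ bellTuples (2*k) := by
    rw [bellTuples, Finset.mem_filter]
    constructor
    · rw [Fintype.mem_piFinset]
      intro i
      rw [Finset.mem_range]
      by_cases hi : i = i₁ <;> simp [hl₀, hi] <;> omega
    · rw [Finset.sum_eq_single_of_mem i₁ (Finset.mem_univ _)]
      · simp [hl₀, i₁]
      · intro b _ hb; simp [hl₀, hb]
  have hval : ∏ i : Fin (2*k), (x * V (i.1 + 1)) ^ (l₀ i) /
      ((Nat.factorial (i.1 + 1) : ℝ) ^ (l₀ i) * (Nat.factorial (l₀ i) : ℝ))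
      = (x * V 2)^k / (2^k * k.factorial) := by
    rw [Finset.prod_eq_single_of_mem i₁ (Finset.mem_univ _)]
    · simp only [hl₀, if_pos rfl, i₁]
      norm_num [Nat.factorial]
    · intro b _ hb; simp [hl₀, hb]
  have hsum : (x * V 2)^k / (2^k * k.factorial) ≤ ∑ l ∈ bellTuples (2*k), ∏ i : Fin (2*k),
      (x * V (i.1 + 1)) ^ (l i) /
      ((Nat.factorial (i.1 + 1) : ℝ) ^ (l i) * (Nat.factorial (l i) : ℝ)) := by
    rw [← hval]
    exact Finset.single_le_sum (fun l _ => term_nonneg V x hVpos hx _ l) hmem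
  rw [weightedBell, mul_div_assoc]
  exact mul_le_mul_of_nonneg_left hsum (by positivity)

include hVpos hx in
lemma weightedBell_upper (n : ℕ) (u : ℝ) (hu : 0 < u) :
    weightedBell V n x * u^n ≤
      (n.factorial : ℝ) * Real.exp (∑ i : Fin n, x * V (i.1+1) * u^(i.1+1) / (i.1+1).factorial) := by
  rw [weightedBell, mul_assoc, Finset.sum_mul]
  apply mul_le_mul_of_nonneg_left _ (by positivity)
  set a : Fin n → ℝ := fun i => x * V (i.1+1) * u^(i.1+1) / (i.1+1).factorial with ha
  have hanneg : ∀ i, 0 ≤ a i := by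
    intro i; have := hVpos (i.1+1) (by omega); rw [ha]; positivity
  have hstep : ∀ l ∈ bellTuples n, (∏ i : Fin n,
      (x * V (i.1 + 1)) ^ (l i) /
      ((Nat.factorial (i.1 + 1) : ℝ) ^ (l i) * (Nat.factorial (l i) : ℝ))) * u^n
      = ∏ i : Fin n, (a i)^(l i) / (l i).factorial := by
    intro l hl
    rw [bellTuples, Finset.mem_filter] at hl
    have hn : u^n = ∏ i : Fin n, (u^(i.1+1))^(l i) := by
      have : ∏ i : Fin n, (u^(i.1+1))^(l i) = ∏ i : Fin n, u^((i.1+1) * l i) := by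
        apply Finset.prod_congr rfl; intro i _; rw [← pow_mul]
      rw [this, Finset.prod_pow_eq_pow_sum, hl.2]
    rw [hn, ← Finset.prod_mul_distrib]
    apply Finset.prod_congr rfl
    intro i _
    rw [ha]
    have hf1 : (0:ℝ) < ((i.1+1).factorial : ℝ) := by positivity
    have hf2 : (0:ℝ) < ((l i).factorial : ℝ) := by positivity
    rw [div_pow]
    field_simp
    ring
  rw [Finset.sum_congr rfl hstep]
  have hsub : bellTuples n ⊆ Fintype.piFinset (fun _ : Fin n => Finset.range (n+1)) :=
    Finset.filter_subset _ _
  calc ∑ l ∈ bellTuples n, ∏ i : Fin n, (a i)^(l i) / (l i).factorial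
      ≤ ∑ l ∈ Fintype.piFinset (fun _ : Fin n => Finset.range (n+1)),
          ∏ i : Fin n, (a i)^(l i) / (l i).factorial := by
        apply Finset.sum_le_sum_of_subset_of_nonneg hsub
        intro l _ _
        apply Finset.prod_nonneg; intro i _
        have := hanneg i; positivity
    _ = ∏ i : Fin n, ∑ m ∈ Finset.range (n+1), (a i)^m / m.factorial := by
        rw [Finset.prod_univ_sum]
    _ ≤ ∏ i : Fin n, Real.exp (a i) := by
        apply Finset.prod_le_prod
        · intro i _; apply Finset.sum_nonneg; intro m _; have := hanneg i; positivity
        · intro i _; exact Real.sum_le_exp_of_nonneg (hanneg i) (n+1)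
    _ = Real.exp (∑ i : Fin n, a i) := (Real.exp_sum _ _).symm

end Bounds


lemma expsum_bound (V : ℕ → ℝ) (hVpos : ∀ i : ℕ, 1 ≤ i → 0 ≤ V i) (hV1 : V 1 = 0)
    (ρ C : ℝ) (hρ : 0 < ρ) (hC : 0 ≤ C)
    (hVC : ∀ j : ℕ, 1 ≤ j → V j ≤ C * j.factorial / ρ^j)
    (x u : ℝ) (hx : 0 ≤ x) (hu : 0 < u) (huρ : u ≤ ρ/2) (n : ℕ) :
    ∑ i : Fin n, x * V (i.1+1) * u^(i.1+1) / ((i.1+1).factorial : ℝ)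
      ≤ x * V 2 * u^2 / 2 + 8 * C * x * (u/ρ)^3 := by
  have huρ2 : u/ρ ≤ 1/2 := by rw [div_le_div_iff₀ hρ (by norm_num)]; linarith
  have huρ0 : 0 ≤ u/ρ := by positivity
  have hV2 : 0 ≤ V 2 := hVpos 2 (by omega)
  have key : ∀ m : ℕ, x * V (m+1) * u^(m+1) / ((m+1).factorial : ℝ)
      ≤ (if m = 1 then x * V 2 * u^2/2 else 0) + 4 * C * x * (u/ρ)^3 * (1/2)^m := by
    intro m
    match m with
    | 0 =>
      rw [if_neg (by omega)]
      simp only [hV1, mul_zero, zero_mul, zero_div, zero_add]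
      positivity
    | 1 =>
      rw [if_pos rfl]
      have hLHS : x * V (1+1) * u^(1+1) / (((1+1).factorial : ℕ) : ℝ) = x * V 2 * u^2/2 := by
        norm_num [Nat.factorial]
      rw [hLHS]
      have : (0:ℝ) ≤ 4 * C * x * (u/ρ)^3 * (1/2)^1 := by positivity
      linarith
    | (m+2) =>
      rw [if_neg (by omega)]
      have hfac : (0:ℝ) < ((m+3).factorial : ℝ) := by positivity
      have hV3 := hVC (m+3) (by omega)
      have step1 : x * V (m+2+1) * u^(m+2+1) / ((m+2+1).factorial : ℝ)
          ≤ C * x * (u/ρ)^(m+3) := by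
        have e0 : C * x * (u/ρ)^(m+3) = x * (C * ((m+3).factorial) / ρ^(m+3)) * u^(m+3) / ((m+3).factorial : ℝ) := by
          rw [div_pow]
          field_simp
        rw [show m+2+1 = m+3 from rfl, e0]
        gcongr
      have step2 : C * x * (u/ρ)^(m+3) ≤ 4 * C * x * (u/ρ)^3 * (1/2)^(m+2) := by
        have e1 : (u/ρ)^(m+3) = (u/ρ)^3 * (u/ρ)^m := by rw [← pow_add]; ring_nf
        have e2 : (u/ρ)^m ≤ (1/2)^m := pow_le_pow_left₀ huρ0 huρ2 m
        have e3 : ((1:ℝ)/2)^(m+2) = (1/2)^m * (1/4) := by rw [pow_add]; norm_num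
        calc C * x * (u/ρ)^(m+3) = C * x * ((u/ρ)^3 * (u/ρ)^m) := by rw [e1]
          _ ≤ C * x * ((u/ρ)^3 * (1/2)^m) := by
              apply mul_le_mul_of_nonneg_left _ (by positivity)
              exact mul_le_mul_of_nonneg_left e2 (by positivity)
          _ = 4 * C * x * (u/ρ)^3 * (1/2)^(m+2) := by rw [e3]; ring
      calc x * V (m+2+1) * u^(m+2+1) / ((m+2+1).factorial : ℝ)
          ≤ C * x * (u/ρ)^(m+3) := step1
        _ ≤ 4 * C * x * (u/ρ)^3 * (1/2)^(m+2) := step2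
        _ = 0 + 4 * C * x * (u/ρ)^3 * (1/2)^(m+2) := by ring
  have hgeom : ∑ i ∈ Finset.range n, ((1:ℝ)/2)^i ≤ 2 := by
    rw [geom_sum_eq (by norm_num : ((1:ℝ)/2) ≠ 1) n]
    have h1 : (0:ℝ) ≤ (1/2:ℝ)^n := by positivity
    have h2 : ((1:ℝ)/2)^n ≤ 1 := pow_le_one₀ (by norm_num) (by norm_num)
    rw [div_le_iff_of_neg (by norm_num : ((1:ℝ)/2 - 1) < 0)]
    linarith
  calc ∑ i : Fin n, x * V (i.1+1) * u^(i.1+1) / ((i.1+1).factorial : ℝ)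
      ≤ ∑ i : Fin n, ((if i.1 = 1 then x * V 2 * u^2/2 else 0) + 4 * C * x * (u/ρ)^3 * (1/2)^i.1) :=
        Finset.sum_le_sum (fun i _ => key i.1)
    _ = (∑ i ∈ Finset.range n, (if i = 1 then x * V 2 * u^2/2 else 0))
        + 4 * C * x * (u/ρ)^3 * ∑ i ∈ Finset.range n, ((1:ℝ)/2)^i := by
        rw [← Fin.sum_univ_eq_sum_range (fun i => if i = 1 then x * V 2 * u^2/2 else 0) n,
          ← Fin.sum_univ_eq_sum_range (fun i => ((1:ℝ)/2)^i) n,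
          Finset.mul_sum, ← Finset.sum_add_distrib]
    _ ≤ x * V 2 * u^2/2 + 4 * C * x * (u/ρ)^3 * 2 := by
        apply add_le_add
        · rw [Finset.sum_ite_eq' (Finset.range n) 1 (fun _ => x * V 2 * u^2/2)]
          split
          · exact le_refl _
          · positivity
        · exact mul_le_mul_of_nonneg_left hgeom (by positivity)
    _ ≤ x * V 2 * u^2 / 2 + 8 * C * x * (u/ρ)^3 := le_of_eq (by ring)


/-- Theorem 1.1, part B, second case of (1.11), even-moment form (1.12):
if `V_1 = 0`, `V_2 > 0`, all odd moments vanish and `x_k / k → ∞`, then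
`(M_{2k}(x_k))^{1/k} · e / (2 k x_k V_2) → 1`. -/
theorem stmt5 (V : ℕ → ℝ) (hVpos : ∀ i : ℕ, 1 ≤ i → 0 ≤ V i)
    (hV1 : V 1 = 0) (hV2 : 0 < V 2) (hVodd : ∀ j : ℕ, V (2 * j + 1) = 0)
    (u0 : ℝ≥0∞) (hu0 : 0 < u0) (hH : HFinite V u0)
    (x : ℕ → ℝ) (hx : ∀ k, 0 < x k)
    (hxinf : Tendsto (fun k : ℕ => x k / (k : ℝ)) atTop atTop) :
    Tendsto (fun k : ℕ =>
        (weightedBell V (2 * k) (x k)) ^ ((k : ℝ)⁻¹) * Real.exp 1 / (2 * k * x k * V 2))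
      atTop (nhds 1) := by
  classical
  -- ===== choose ρ and C =====
  obtain ⟨c, hc0, hcu⟩ := exists_between hu0
  have hcne : c ≠ ⊤ := (hcu.trans_le le_top).ne
  set ρ := c.toReal with hρdef
  have hρ : 0 < ρ := ENNReal.toReal_pos hc0.ne' hcne
  have hofρ : ENNReal.ofReal ρ < u0 := by rwa [ENNReal.ofReal_toReal hcne]
  have hsum := hH ρ hρ.le hofρ
  set C : ℝ := max (∑' i : ℕ, V (i+1) * ρ^(i+1) / ((i+1).factorial : ℝ)) 1 with hCdef
  have hC1 : (1:ℝ) ≤ C := le_max_right _ _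
  have hC : (0:ℝ) ≤ C := by linarith
  have hVC : ∀ j : ℕ, 1 ≤ j → V j ≤ C * j.factorial / ρ^j := by
    intro j hj
    obtain ⟨i, rfl⟩ : ∃ i, j = i+1 := ⟨j-1, by omega⟩
    have hterm : V (i+1) * ρ^(i+1) / ((i+1).factorial : ℝ) ≤ C := by
      refine le_trans (le_trans ?_ (Summable.sum_le_tsum {i} (fun m _ => ?_) hsum)) (le_max_left _ _)
      · rw [Finset.sum_singleton]
      · have := hVpos (m+1) (by omega); positivity
    rw [div_le_iff₀ (by positivity : (0:ℝ) < ((i+1).factorial : ℝ))] at hterm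
    rw [le_div_iff₀ (by positivity : (0:ℝ) < ρ^(i+1))]
    linarith
  -- ===== auxiliary sequences =====
  set u : ℕ → ℝ := fun k => Real.sqrt (2*(k:ℝ)/(x k * V 2)) with hudef
  set δ : ℕ → ℝ := fun k => 16*C/(V 2*ρ^3) * u k with hδdef
  set e : ℕ → ℝ := fun k =>
    (k:ℝ)⁻¹ * Real.log (weightedBell V (2*k) (x k)) + 1 - Real.log (2*(k:ℝ)*x k*V 2) with hedef
  -- k / x k → 0
  have hq : Tendsto (fun k : ℕ => (k:ℝ)/x k) atTop (nhds 0) := by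
    have h1 := hxinf.inv_tendsto_atTop
    apply h1.congr'
    filter_upwards [eventually_ge_atTop 1] with k hk
    have hk0 : (0:ℝ) < k := by exact_mod_cast hk
    simp only [Pi.inv_apply]
    rw [inv_div]
  -- u → 0
  have hu_lim : Tendsto u atTop (nhds 0) := by
    have hinner : Tendsto (fun k : ℕ => 2*(k:ℝ)/(x k * V 2)) atTop (nhds 0) := by
      have := hq.const_mul (2/V 2)
      rw [mul_zero] at this
      apply this.congr
      intro k
      rw [div_mul_div_comm, mul_comm (V 2) (x k)]
    have hsq := (Real.continuous_sqrt.tendsto' 0 0 Real.sqrt_zero).comp hinner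
    exact hsq
  have hδ_lim : Tendsto δ atTop (nhds 0) := by
    have := hu_lim.const_mul (16*C/(V 2*ρ^3))
    rw [mul_zero] at this
    exact this
  -- eventual bound set
  have hev_u : ∀ᶠ k in atTop, u k ≤ ρ/2 := by
    have := hu_lim.eventually_lt_const (show (0:ℝ) < ρ/2 by positivity)
    filter_upwards [this] with k hk using hk.le
  -- Slog limits
  have hcomp : Tendsto (fun k : ℕ => Slog (2*k) / ((2*k : ℕ):ℝ)) atTop (nhds 0) := by
    exact tendsto_Slog_div.comp (tendsto_atTop_mono (fun k => by simp only [id_eq]; omega) tendsto_id)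
  have hS2 : Tendsto (fun k : ℕ => (k:ℝ)⁻¹ * Slog (2*k)) atTop (nhds 0) := by
    have h2 := hcomp.const_mul (2:ℝ)
    rw [mul_zero] at h2
    apply h2.congr
    intro k
    rcases Nat.eq_zero_or_pos k with h | h
    · subst h; simp
    · have hk0 : (0:ℝ) < k := by exact_mod_cast h
      push_cast
      field_simp
  have hS1 : Tendsto (fun k : ℕ => (k:ℝ)⁻¹ * Slog k) atTop (nhds 0) := by
    apply tendsto_Slog_div.congr
    intro k
    rw [div_eq_inv_mul]
  have hlowTend : Tendsto (fun k : ℕ => (k:ℝ)⁻¹ * (Slog (2*k) - Slog k)) atTop (nhds 0) := by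
    have := hS2.sub hS1
    rw [sub_zero] at this
    apply this.congr
    intro k
    rw [mul_sub]
  have hupTend : Tendsto (fun k : ℕ => (k:ℝ)⁻¹ * Slog (2*k) + δ k) atTop (nhds 0) := by
    have := hS2.add hδ_lim
    rw [add_zero] at this
    exact this
  -- ===== main eventual facts =====
  have hmain : ∀ᶠ k : ℕ in atTop,
      ((k:ℝ)⁻¹ * (Slog (2*k) - Slog k) ≤ e k ∧ e k ≤ (k:ℝ)⁻¹ * Slog (2*k) + δ k) ∧
      (weightedBell V (2*k) (x k)) ^ ((k:ℝ)⁻¹) * Real.exp 1 / (2*(k:ℝ)*x k*V 2)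
        = Real.exp (e k) := by
    filter_upwards [eventually_ge_atTop 1, hev_u] with k hk1 hku
    have hK : (0:ℝ) < (k:ℝ) := by exact_mod_cast hk1
    have hxk : 0 < x k := hx k
    have hupos : 0 < u k := Real.sqrt_pos.mpr (by positivity)
    have hu2 : (u k)^2 = 2*(k:ℝ)/(x k * V 2) := Real.sq_sqrt (by positivity)
    set M := weightedBell V (2*k) (x k) with hMdef
    -- positivity of M via lower bound
    have hlow := weightedBell_lower V (x k) hVpos hxk.le k hk1
    have hBpos : (0:ℝ) < ((2*k).factorial : ℝ) * (x k * V 2)^k / (2^k * k.factorial) := by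
      positivity
    have hMpos : 0 < M := lt_of_lt_of_le hBpos hlow
    -- log identities
    have hf2k : (0:ℝ) < (((2*k).factorial : ℕ) : ℝ) := by positivity
    have hfk : (0:ℝ) < ((k.factorial : ℕ) : ℝ) := by positivity
    have hS2k_id : Real.log (((2*k).factorial : ℕ) : ℝ)
        = Slog (2*k) + (2*(k:ℝ))*Real.log (2*(k:ℝ)) - 2*(k:ℝ) := by
      rw [hSlog_def]; push_cast; ring
    have hSk_id : Real.log ((k.factorial : ℕ) : ℝ)
        = Slog k + (k:ℝ)*Real.log (k:ℝ) - (k:ℝ) := by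
      rw [hSlog_def]; ring
    have hlog2K : Real.log (2*(k:ℝ)) = Real.log 2 + Real.log (k:ℝ) :=
      Real.log_mul (by norm_num) hK.ne'
    have hlogxV : Real.log (x k * V 2) = Real.log (x k) + Real.log (V 2) :=
      Real.log_mul hxk.ne' hV2.ne'
    have hlogdenom : Real.log (2*(k:ℝ)*x k*V 2)
        = Real.log 2 + Real.log (k:ℝ) + Real.log (x k) + Real.log (V 2) := by
      rw [Real.log_mul (by positivity) hV2.ne', Real.log_mul (by positivity) hxk.ne', hlog2K]
    have hlogu : 2*Real.log (u k)
        = Real.log 2 + Real.log (k:ℝ) - (Real.log (x k) + Real.log (V 2)) := by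
      have h1 : Real.log ((u k)^2) = 2*Real.log (u k) := by
        rw [Real.log_pow]; push_cast; ring
      rw [← h1, hu2, Real.log_div (by positivity) (by positivity), Real.log_mul (by norm_num) hK.ne',
        hlogxV]
    constructor
    · constructor
      · -- lower bound
        have hlogB : Real.log (((2*k).factorial : ℝ) * (x k * V 2)^k / (2^k * k.factorial))
            = Real.log (((2*k).factorial : ℕ) : ℝ) + (k:ℝ)*Real.log (x k * V 2)
              - ((k:ℝ)*Real.log 2 + Real.log ((k.factorial : ℕ) : ℝ)) := by
          rw [Real.log_div (by positivity) (by positivity),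
            Real.log_mul (by positivity) (by positivity),
            Real.log_mul (by positivity) (by positivity),
            Real.log_pow, Real.log_pow]
        have ha : (k:ℝ)⁻¹ * Real.log (((2*k).factorial : ℝ) * (x k * V 2)^k / (2^k * k.factorial))
            ≤ (k:ℝ)⁻¹ * Real.log M :=
          mul_le_mul_of_nonneg_left (Real.log_le_log hBpos hlow) (by positivity)
        have hEq : (k:ℝ)⁻¹ * Real.log (((2*k).factorial : ℝ) * (x k * V 2)^k / (2^k * k.factorial))
            + 1 - Real.log (2*(k:ℝ)*x k*V 2) = (k:ℝ)⁻¹ * (Slog (2*k) - Slog k) := by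
          rw [hlogB, hS2k_id, hSk_id, hlogdenom, hlog2K, hlogxV]
          field_simp
          ring
        rw [hedef]
        simp only
        linarith
      · -- upper bound
        have hup := weightedBell_upper V (x k) hVpos hxk.le (2*k) (u k) hupos
        have hsumB := expsum_bound V hVpos hV1 ρ C hρ hC hVC (x k) (u k) hxk.le hupos hku (2*k)
        have hEval : x k * V 2 * (u k)^2/2 + 8*C*(x k)*(u k/ρ)^3 = (k:ℝ) + (k:ℝ)*δ k := by
          have h3 : (u k)^3 = (2*(k:ℝ)/(x k*V 2)) * u k := by rw [pow_succ, hu2]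
          rw [hδdef, hu2, div_pow, h3]
          simp only
          field_simp
          ring
        have hMu : M * (u k)^(2*k) ≤ (((2*k).factorial : ℕ) : ℝ)
            * Real.exp ((k:ℝ) + (k:ℝ)*δ k) := by
          refine le_trans hup ?_
          apply mul_le_mul_of_nonneg_left _ (by positivity)
          apply Real.exp_le_exp.mpr
          rw [← hEval]
          exact hsumB
        have hlogM : Real.log M + 2*(k:ℝ)*Real.log (u k)
            ≤ Real.log (((2*k).factorial : ℕ) : ℝ) + ((k:ℝ) + (k:ℝ)*δ k) := by
          have h4 : Real.log (M * (u k)^(2*k)) = Real.log M + 2*(k:ℝ)*Real.log (u k) := by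
            rw [Real.log_mul hMpos.ne' (by positivity), Real.log_pow]
            push_cast; ring
          have h5 : Real.log ((((2*k).factorial : ℕ) : ℝ) * Real.exp ((k:ℝ) + (k:ℝ)*δ k))
              = Real.log (((2*k).factorial : ℕ) : ℝ) + ((k:ℝ) + (k:ℝ)*δ k) := by
            rw [Real.log_mul (by positivity) (Real.exp_ne_zero _), Real.log_exp]
          rw [← h4, ← h5]
          exact Real.log_le_log (by positivity) hMu
        have hEq2 : (k:ℝ)⁻¹ * (Real.log (((2*k).factorial : ℕ) : ℝ) + ((k:ℝ) + (k:ℝ)*δ k)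
            - 2*(k:ℝ)*Real.log (u k)) + 1 - Real.log (2*(k:ℝ)*x k*V 2)
            = (k:ℝ)⁻¹ * Slog (2*k) + δ k := by
          rw [hS2k_id, hlogdenom, hlog2K]
          have hlogu' : Real.log (u k)
              = (Real.log 2 + Real.log (k:ℝ) - (Real.log (x k) + Real.log (V 2)))/2 := by
            linarith
          rw [hlogu']
          field_simp
          ring
        rw [hedef]
        simp only
        have ha2 : (k:ℝ)⁻¹ * Real.log M ≤ (k:ℝ)⁻¹ * (Real.log (((2*k).factorial : ℕ) : ℝ)
            + ((k:ℝ) + (k:ℝ)*δ k) - 2*(k:ℝ)*Real.log (u k)) := by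
          apply mul_le_mul_of_nonneg_left _ (by positivity)
          linarith
        linarith
    · -- equality with exp
      rw [hedef]
      simp only
      rw [Real.rpow_def_of_pos hMpos, Real.exp_sub, Real.exp_add, Real.exp_log (by positivity),
        mul_comm (Real.log M) ((k:ℝ)⁻¹)]
  -- ===== squeeze =====
  have he_lim : Tendsto e atTop (nhds 0) := by
    apply tendsto_of_tendsto_of_tendsto_of_le_of_le' hlowTend hupTend
    · filter_upwards [hmain] with k hk using hk.1.1
    · filter_upwards [hmain] with k hk using hk.1.2
  have hexp : Tendsto (fun k => Real.exp (e k)) atTop (nhds 1) := by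
    have := (Real.continuous_exp.tendsto 0).comp he_lim
    rwa [Real.exp_zero] at this
  apply hexp.congr'
  filter_upwards [hmain] with k hk
  exact hk.2.symm

end
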